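/- Let (x_j)_{j=1}^∞ be a 1-subsymmetric basis of a Banach space X such that there is a constant c > 0 with ‖∑_{j=1}^n x_j‖ ≥ c·n for all n. Then (x_j) is equivalent to the unit vector basis of ℓ₁, i.e., there is a constant D such that ∑_j |a_j| ≤ D·‖∑_j a_j x_j‖ for every finitely supported scalar sequence (a_j). -/

import Mathlib

open Finset

section Aux

variable {X : Type*} [NormedAddCommGroup X] [NormedSpace ℝ X]

/-- Flipping one coordinate by a factor `θ` with `|θ| ≤ 1` does not increase the norm,
given 1-unconditionality. -/
lemma flip_one_aux (x : ℕ → X)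
    (huncond : ∀ (ε : ℕ → ℝ), (∀ j, |ε j| = 1) →
      ∀ (a : ℕ → ℝ) (s : Finset ℕ),
        ‖∑ j ∈ s, (ε j * a j) • x j‖ = ‖∑ j ∈ s, a j • x j‖)
    (c : ℕ → ℝ) (s : Finset ℕ) (j₀ : ℕ) (θ : ℝ) (hθ : |θ| ≤ 1) :
    ‖∑ j ∈ s, (Function.update c j₀ (θ * c j₀)) j • x j‖ ≤ ‖∑ j ∈ s, c j • x j‖ := by
  obtain ⟨hθ1, hθ2⟩ := abs_le.1 hθ
  set ε : ℕ → ℝ := fun j => if j = j₀ then (-1:ℝ) else 1 with hε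
  have hεabs : ∀ j, |ε j| = 1 := by
    intro j; by_cases h : j = j₀ <;> simp [hε, h]
  have h1 : ‖∑ j ∈ s, (ε j * c j) • x j‖ = ‖∑ j ∈ s, c j • x j‖ := huncond ε hεabs c s
  have key : ∑ j ∈ s, (Function.update c j₀ (θ * c j₀)) j • x j
      = ((1+θ)/2) • ∑ j ∈ s, c j • x j + ((1-θ)/2) • ∑ j ∈ s, (ε j * c j) • x j := by
    rw [Finset.smul_sum, Finset.smul_sum, ← Finset.sum_add_distrib]
    refine Finset.sum_congr rfl fun j _ => ?_
    rw [smul_smul, smul_smul, ← add_smul]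
    by_cases h : j = j₀
    · subst h
      rw [Function.update_self]
      congr 1
      simp [hε]
      ring
    · rw [Function.update_of_ne h]
      congr 1
      simp [hε, h]
      ring
  rw [key]
  calc ‖((1+θ)/2) • ∑ j ∈ s, c j • x j + ((1-θ)/2) • ∑ j ∈ s, (ε j * c j) • x j‖
      ≤ ‖((1+θ)/2) • ∑ j ∈ s, c j • x j‖ + ‖((1-θ)/2) • ∑ j ∈ s, (ε j * c j) • x j‖ :=
        norm_add_le _ _
    _ = ((1+θ)/2) * ‖∑ j ∈ s, c j • x j‖ + ((1-θ)/2) * ‖∑ j ∈ s, c j • x j‖ := by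
        rw [norm_smul, norm_smul, h1, Real.norm_eq_abs, Real.norm_eq_abs,
          abs_of_nonneg (by linarith), abs_of_nonneg (by linarith)]
    _ = ‖∑ j ∈ s, c j • x j‖ := by ring

/-- Domination: if `|b j| ≤ |a j|` on `s`, then `‖∑ b j • x j‖ ≤ ‖∑ a j • x j‖`. -/
lemma dom_aux (x : ℕ → X)
    (huncond : ∀ (ε : ℕ → ℝ), (∀ j, |ε j| = 1) →
      ∀ (a : ℕ → ℝ) (s : Finset ℕ),
        ‖∑ j ∈ s, (ε j * a j) • x j‖ = ‖∑ j ∈ s, a j • x j‖)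
    (a b : ℕ → ℝ) (s : Finset ℕ) (h : ∀ j ∈ s, |b j| ≤ |a j|) :
    ‖∑ j ∈ s, b j • x j‖ ≤ ‖∑ j ∈ s, a j • x j‖ := by
  have key : ∀ t : Finset ℕ,
      ‖∑ j ∈ s, (if j ∈ t then b j else a j) • x j‖ ≤ ‖∑ j ∈ s, a j • x j‖ := by
    intro t
    induction t using Finset.induction_on with
    | empty => simp
    | @insert j₀ t hj₀t ih =>
      by_cases hj₀s : j₀ ∈ s
      · set cf : ℕ → ℝ := fun j => if j ∈ t then b j else a j with hcf
        have hcj₀ : cf j₀ = a j₀ := by simp [hcf, hj₀t]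
        set θ : ℝ := if a j₀ = 0 then 0 else b j₀ / a j₀ with hθdef
        have hb0 : a j₀ = 0 → b j₀ = 0 := by
          intro h0
          have := h j₀ hj₀s
          rw [h0, abs_zero] at this
          exact abs_eq_zero.1 (le_antisymm this (abs_nonneg _))
        have hθ : |θ| ≤ 1 := by
          by_cases h0 : a j₀ = 0
          · simp [hθdef, h0]
          · rw [hθdef, if_neg h0, abs_div]
            rw [div_le_one (abs_pos.2 h0)]
            exact h j₀ hj₀s
        have hbθ : θ * cf j₀ = b j₀ := by
          rw [hcj₀]
          by_cases h0 : a j₀ = 0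
          · simp [hθdef, h0, hb0 h0]
          · rw [hθdef, if_neg h0]; field_simp
        have step := flip_one_aux x huncond cf s j₀ θ hθ
        have heq : ∑ j ∈ s, (if j ∈ insert j₀ t then b j else a j) • x j
            = ∑ j ∈ s, (Function.update cf j₀ (θ * cf j₀)) j • x j := by
          refine Finset.sum_congr rfl fun j _ => ?_
          by_cases hjj : j = j₀
          · subst hjj
            rw [Function.update_self, hbθ, if_pos (Finset.mem_insert_self _ _)]
          · rw [Function.update_of_ne hjj]
            congr 1
            simp [hcf, Finset.mem_insert, hjj]
        rw [heq]
        exact le_trans step ih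
      · have heq : ∑ j ∈ s, (if j ∈ insert j₀ t then b j else a j) • x j
            = ∑ j ∈ s, (if j ∈ t then b j else a j) • x j := by
          refine Finset.sum_congr rfl fun j hj => ?_
          have hjj : j ≠ j₀ := fun hh => hj₀s (hh ▸ hj)
          congr 1
          simp [Finset.mem_insert, hjj]
        rw [heq]; exact ih
  have := key s
  have heq : ∑ j ∈ s, (if j ∈ s then b j else a j) • x j = ∑ j ∈ s, b j • x j :=
    Finset.sum_congr rfl fun j hj => by rw [if_pos hj]
  rwa [heq] at this

end Aux

/-- If `(x j)` is a 1-subsymmetric basis (1-unconditional and isometrically equivalent to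
all its subsequences) of a Banach space and `‖∑_{j<n} x j‖ ≥ c·n` for some `c > 0`,
then `(x j)` is equivalent to the unit vector basis of `ℓ₁`. -/
theorem subsymmetric_lower_bound_equiv_l1
    {X : Type*} [NormedAddCommGroup X] [NormedSpace ℝ X] [CompleteSpace X]
    (x : ℕ → X)
    (huncond : ∀ (ε : ℕ → ℝ), (∀ j, |ε j| = 1) →
      ∀ (a : ℕ → ℝ) (s : Finset ℕ),
        ‖∑ j ∈ s, (ε j * a j) • x j‖ = ‖∑ j ∈ s, a j • x j‖)
    (hsubsym : ∀ (φ : ℕ → ℕ), StrictMono φ →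
      ∀ (a : ℕ → ℝ) (s : Finset ℕ),
        ‖∑ j ∈ s, a j • x (φ j)‖ = ‖∑ j ∈ s, a j • x j‖)
    (c : ℝ) (hc : 0 < c)
    (hlow : ∀ n : ℕ, c * n ≤ ‖∑ j ∈ Finset.range n, x j‖) :
    ∃ D : ℝ, ∀ (a : ℕ → ℝ) (s : Finset ℕ),
      ∑ j ∈ s, |a j| ≤ D * ‖∑ j ∈ s, a j • x j‖ := by
  refine ⟨1/c, fun a s => ?_⟩
  -- reduce to nonnegative coefficients
  set b : ℕ → ℝ := fun j => |a j| with hbdef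
  have hbnn : ∀ j, 0 ≤ b j := fun j => abs_nonneg _
  have habs : ‖∑ j ∈ s, b j • x j‖ = ‖∑ j ∈ s, a j • x j‖ := by
    have h1 := huncond (fun j => if a j < 0 then -1 else 1)
      (by intro j; by_cases h : a j < 0 <;> simp [h]) a s
    rw [← h1]
    congr 1
    refine Finset.sum_congr rfl fun j _ => ?_
    congr 1
    by_cases h : a j < 0
    · simp [hbdef, h, abs_of_neg h]
    · simp [hbdef, h, abs_of_nonneg (not_lt.1 h)]
  set v : X := ∑ j ∈ s, b j • x j with hvdef
  set A : ℝ := ∑ j ∈ s, b j with hAdef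
  have hA0 : 0 ≤ A := Finset.sum_nonneg fun j _ => hbnn j
  suffices hmain : A ≤ 1/c * ‖v‖ by
    calc ∑ j ∈ s, |a j| = A := rfl
      _ ≤ 1/c * ‖v‖ := hmain
      _ = 1/c * ‖∑ j ∈ s, a j • x j‖ := by rw [hvdef, habs]
  set m : ℕ := s.sup id + 1 with hmdef
  have hm : ∀ j ∈ s, j < m := fun j hj =>
    Nat.lt_succ_of_le (Finset.le_sup (f := id) hj)
  -- key inequality for every N
  have key : ∀ N : ℕ, A * (c * ((N - m : ℕ) : ℝ)) ≤ (N : ℝ) * ‖v‖ := by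
    intro N
    classical
    set P : Finset (ℕ × ℕ) := (Finset.range N) ×ˢ s with hPdef
    set C : ℕ → ℝ := fun t => ∑ p ∈ P.filter (fun p => p.2 + p.1 = t), b p.2 with hCdef
    -- the averaged vector
    have hmaps : ∀ p ∈ P, p.2 + p.1 ∈ Finset.range (N + m) := by
      rintro ⟨i, j⟩ hp
      rw [hPdef, Finset.mem_product, Finset.mem_range] at hp
      have h1 : i < N := hp.1
      have h2 : j < m := hm j hp.2
      rw [Finset.mem_range]
      omega
    have hw : ∑ i ∈ Finset.range N, ∑ j ∈ s, b j • x (j + i)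
        = ∑ t ∈ Finset.range (N + m), C t • x t := by
      have h1 : ∑ i ∈ Finset.range N, ∑ j ∈ s, b j • x (j + i)
          = ∑ p ∈ P, b p.2 • x (p.2 + p.1) := by
        rw [hPdef, Finset.sum_product]
      have h2 := Finset.sum_fiberwise_of_maps_to hmaps (fun p : ℕ × ℕ => b p.2 • x (p.2 + p.1))
      rw [h1, ← h2]
      refine Finset.sum_congr rfl fun t _ => ?_
      simp only [hCdef]
      rw [Finset.sum_smul]
      refine Finset.sum_congr rfl fun p hp => ?_
      rw [(Finset.mem_filter.1 hp).2]
    -- fibers as images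
    have hfib : ∀ t : ℕ, P.filter (fun p => p.2 + p.1 = t)
        = (s.filter (fun j => j ≤ t ∧ t < j + N)).image (fun j => (t - j, j)) := by
      intro t
      rw [hPdef]
      ext ⟨i, j⟩
      simp only [Finset.mem_filter, Finset.mem_image, Finset.mem_product,
        Finset.mem_range, Prod.mk.injEq]
      constructor
      · rintro ⟨⟨hi, hj⟩, hij⟩
        exact ⟨j, ⟨hj, by omega, by omega⟩, by omega, rfl⟩
      · rintro ⟨k, ⟨hk, hk1, hk2⟩, h1, rfl⟩
        exact ⟨⟨by omega, hk⟩, by omega⟩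
    have hCeq : ∀ t : ℕ, C t = ∑ j ∈ s.filter (fun j => j ≤ t ∧ t < j + N), b j := by
      intro t
      simp only [hCdef]
      rw [hfib t]
      exact Finset.sum_image (fun p _ q _ h => (Prod.mk.injEq _ _ _ _ ▸ h).2)
    have hCle : ∀ t, C t ≤ A := by
      intro t
      rw [hCeq, hAdef]
      exact Finset.sum_le_sum_of_subset_of_nonneg (Finset.filter_subset _ _)
        (fun j _ _ => hbnn j)
    have hC0 : ∀ t, 0 ≤ C t := fun t => Finset.sum_nonneg fun p _ => hbnn _
    have hCA : ∀ t ∈ Finset.Ico m N, C t = A := by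
      intro t ht
      rw [Finset.mem_Ico] at ht
      rw [hCeq, hAdef]
      congr 1
      apply Finset.filter_true_of_mem
      intro j hj
      have := hm j hj
      omega
    -- upper bound on averaged vector
    have hupper : ‖∑ t ∈ Finset.range (N + m), C t • x t‖ ≤ (N : ℝ) * ‖v‖ := by
      rw [← hw]
      calc ‖∑ i ∈ Finset.range N, ∑ j ∈ s, b j • x (j + i)‖
          ≤ ∑ i ∈ Finset.range N, ‖∑ j ∈ s, b j • x (j + i)‖ := norm_sum_le _ _
        _ = ∑ i ∈ Finset.range N, ‖v‖ := by
            refine Finset.sum_congr rfl fun i _ => ?_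
            have := hsubsym (fun j => j + i) (fun p q h => Nat.add_lt_add_right h i) b s
            rw [hvdef, ← this]
        _ = (N : ℝ) * ‖v‖ := by rw [Finset.sum_const, Finset.card_range, nsmul_eq_mul]
    -- lower bound: the constant block
    have hBf : ∑ t ∈ Finset.range (N + m),
        (if t ∈ Finset.Ico m N then A else 0) • x t = A • ∑ t ∈ Finset.Ico m N, x t := by
      rw [Finset.smul_sum]
      have hsub : Finset.Ico m N ⊆ Finset.range (N + m) := by
        intro t ht
        rw [Finset.mem_Ico] at ht
        rw [Finset.mem_range]
        omega
      rw [← Finset.sum_subset hsub (fun t _ htn => by rw [if_neg htn, zero_smul])]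
      exact Finset.sum_congr rfl fun t ht => by rw [if_pos ht]
    have hdom := dom_aux x huncond C (fun t => if t ∈ Finset.Ico m N then A else 0)
      (Finset.range (N + m)) (by
        intro t _
        show |if t ∈ Finset.Ico m N then A else 0| ≤ |C t|
        by_cases ht : t ∈ Finset.Ico m N
        · rw [if_pos ht, hCA t ht]
        · rw [if_neg ht, abs_zero]; exact abs_nonneg _)
    rw [hBf] at hdom
    have hblock : c * ((N - m : ℕ) : ℝ) ≤ ‖∑ t ∈ Finset.Ico m N, x t‖ := by
      rw [Finset.sum_Ico_eq_sum_range]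
      have hsp := hsubsym (fun j => m + j) (fun p q h => Nat.add_lt_add_left h m) (fun _ => 1)
        (Finset.range (N - m))
      simp only [one_smul] at hsp
      rw [hsp]
      exact hlow (N - m)
    calc A * (c * ((N - m : ℕ) : ℝ)) ≤ A * ‖∑ t ∈ Finset.Ico m N, x t‖ :=
          mul_le_mul_of_nonneg_left hblock hA0
      _ = ‖A • ∑ t ∈ Finset.Ico m N, x t‖ := by
          rw [norm_smul, Real.norm_eq_abs, abs_of_nonneg hA0]
      _ ≤ ‖∑ t ∈ Finset.range (N + m), C t • x t‖ := hdom
      _ ≤ (N : ℝ) * ‖v‖ := hupper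
  -- take N → ∞
  by_contra hcon
  push_neg at hcon
  have hv : ‖v‖ < c * A := by
    have := mul_lt_mul_of_pos_left hcon hc
    rw [← mul_assoc, mul_one_div, div_self (ne_of_gt hc), one_mul] at this
    exact this
  set δ : ℝ := c * A - ‖v‖ with hδdef
  have hδ : 0 < δ := by rw [hδdef]; linarith
  set K : ℕ := ⌈c * A * m / δ⌉₊ + 1 with hKdef
  have hKgt : c * A * m / δ < (K : ℝ) := by
    calc c * A * m / δ ≤ (⌈c * A * m / δ⌉₊ : ℝ) := Nat.le_ceil _
      _ < (K : ℝ) := by rw [hKdef]; push_cast; linarith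
  have hkey := key (m + K)
  rw [Nat.add_sub_cancel_left] at hkey
  rw [Nat.cast_add m K] at hkey
  -- A * (c * K) ≤ (m + K) * ‖v‖ = (m+K)(cA - δ)
  have h1 : (K : ℝ) * δ ≤ c * A * m := by
    have hvv : ‖v‖ = c * A - δ := by rw [hδdef]; ring
    rw [hvv] at hkey
    nlinarith [(Nat.cast_nonneg m : (0:ℝ) ≤ m), (Nat.cast_nonneg K : (0:ℝ) ≤ K), hδ.le]
  have h2 : c * A * m / δ < c * A * m / δ := by
    calc c * A * m / δ < (K : ℝ) := hKgt
      _ ≤ c * A * m / δ := by rw [le_div_iff₀ hδ]; exact h1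
  exact absurd h2 (lt_irrefl _)
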